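/- There exists a constant c > 0 (independent of n and of the coefficients) such that for every n ≥ 1 and all real numbers α₁, …, α_n, (1/n) ∫_{G_m} | Σ_{k=1}^{n} α_k D_k(x) | dμ(x) ≤ (c/√n) ( Σ_{k=1}^{n} α_k² )^{1/2}. -/

import Mathlib

open MeasureTheory Filter Finset
open scoped ENNReal NNReal Real

noncomputable section

namespace Vilenkin

/-- The bounded Vilenkin group: complete direct product of the cyclic groups `ZMod (m k)`. -/
abbrev G (m : ℕ → ℕ) : Type := ∀ k, ZMod (m k)

/-- The generalized number system `M 0 = 1`, `M (k+1) = m k * M k`. -/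
def M (m : ℕ → ℕ) : ℕ → ℕ
  | 0 => 1
  | k + 1 => m k * M m k

/-- The cylinder neighbourhood `I n = {x | x 0 = ⋯ = x (n-1) = 0}`. -/
def I (m : ℕ → ℕ) (n : ℕ) : Set (G m) := {x | ∀ j < n, x j = 0}

/-- The `j`-th digit of `n` in the generalized number system based on `m`. -/
def digit (m : ℕ → ℕ) (n j : ℕ) : ℕ := n / M m j % m j

/-- The generalized Rademacher functions `r k x = exp (2 π i x_k / m_k)`. -/
def rad (m : ℕ → ℕ) (k : ℕ) (x : G m) : ℂ :=
  Complex.exp (2 * Real.pi * Complex.I * ((x k).val : ℂ) / (m k : ℂ))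

/-- The Vilenkin system `ψ n = ∏ k, (r k) ^ (n_k)`. -/
def psi (m : ℕ → ℕ) (n : ℕ) (x : G m) : ℂ :=
  ∏ k ∈ Finset.range (n + 1), rad m k x ^ digit m n k

/-- The Vilenkin-Dirichlet kernels `D n = ∑_{k<n} ψ k`. -/
def D (m : ℕ → ℕ) (n : ℕ) (x : G m) : ℂ := ∑ k ∈ Finset.range n, psi m k x

/-- The Cesàro numbers `A n α = (α+1)⋯(α+n)/n!`. -/
def A (α : ℝ) (n : ℕ) : ℝ := (∏ i ∈ Finset.range n, (α + (i + 1))) / (n.factorial : ℝ)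

/-- One-dimensional Vilenkin-Fourier coefficients. -/
def fhat1 (m : ℕ → ℕ) (μ : Measure (G m)) (f : G m → ℂ) (i : ℕ) : ℂ :=
  ∫ x, f x * (starRingEnd ℂ) (psi m i x) ∂μ

/-- One-dimensional `(C,-α)` Cesàro means of the Vilenkin-Fourier series. -/
def cesaro1 (m : ℕ → ℕ) (μ : Measure (G m)) (α : ℝ) (f : G m → ℂ) (n : ℕ) (x : G m) : ℂ :=
  ((A (-α) n : ℝ) : ℂ)⁻¹ *
    ∑ i ∈ Finset.range (n + 1), ((A (-α) (n - i) : ℝ) : ℂ) * fhat1 m μ f i * psi m i x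

/-- Double Vilenkin-Fourier coefficients. -/
def fhat2 (m : ℕ → ℕ) (μ : Measure (G m)) (f : G m × G m → ℂ) (i j : ℕ) : ℂ :=
  ∫ z, f z * (starRingEnd ℂ) (psi m i z.1) * (starRingEnd ℂ) (psi m j z.2) ∂(μ.prod μ)

/-- Rectangular partial sums of the double Vilenkin-Fourier series. -/
def partialSum2 (m : ℕ → ℕ) (μ : Measure (G m)) (f : G m × G m → ℂ) (n₁ n₂ : ℕ)
    (z : G m × G m) : ℂ :=
  ∑ k₁ ∈ Finset.range n₁, ∑ k₂ ∈ Finset.range n₂,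
    fhat2 m μ f k₁ k₂ * psi m k₁ z.1 * psi m k₂ z.2

/-- The `(C,-α,-β)` means of the double Vilenkin-Fourier series. -/
def cesaro2 (m : ℕ → ℕ) (μ : Measure (G m)) (α β : ℝ) (f : G m × G m → ℂ) (n₁ n₂ : ℕ)
    (z : G m × G m) : ℂ :=
  ((A (-α) n₁ * A (-β) n₂ : ℝ) : ℂ)⁻¹ *
    ∑ i ∈ Finset.range (n₁ + 1), ∑ j ∈ Finset.range (n₂ + 1),
      ((A (-α) (n₁ - i) * A (-β) (n₂ - j) : ℝ) : ℂ) * fhat2 m μ f i j * psi m i z.1 * psi m j z.2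

/-- One-dimensional modulus of continuity in `L^p`. -/
def omegaOne (m : ℕ → ℕ) (μ : Measure (G m)) (p : ℝ≥0∞) (f : G m → ℂ) (n : ℕ) : ℝ≥0∞ :=
  ⨆ u ∈ I m n, eLpNorm (fun x => f (x - u) - f x) p μ

/-- First partial modulus of continuity in `L^p`. -/
def omega1 (m : ℕ → ℕ) (μ : Measure (G m)) (p : ℝ≥0∞) (f : G m × G m → ℂ) (n : ℕ) : ℝ≥0∞ :=
  ⨆ u ∈ I m n, eLpNorm (fun z => f (z.1 - u, z.2) - f z) p (μ.prod μ)

/-- Second partial modulus of continuity in `L^p`. -/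
def omega2 (m : ℕ → ℕ) (μ : Measure (G m)) (p : ℝ≥0∞) (f : G m × G m → ℂ) (n : ℕ) : ℝ≥0∞ :=
  ⨆ v ∈ I m n, eLpNorm (fun z => f (z.1, z.2 - v) - f z) p (μ.prod μ)

/-- Mixed modulus of continuity in `L^p`. -/
def omega12 (m : ℕ → ℕ) (μ : Measure (G m)) (p : ℝ≥0∞) (f : G m × G m → ℂ) (n l : ℕ) : ℝ≥0∞ :=
  ⨆ u ∈ I m n, ⨆ v ∈ I m l,
    eLpNorm (fun z => f (z.1 - u, z.2 - v) - f (z.1 - u, z.2) - f (z.1, z.2 - v) + f z) p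
      (μ.prod μ)

/-- Total modulus of continuity in `L^p`. -/
def omegaT (m : ℕ → ℕ) (μ : Measure (G m)) (p : ℝ≥0∞) (f : G m × G m → ℂ) (n : ℕ) : ℝ≥0∞ :=
  ⨆ u ∈ I m n, ⨆ v ∈ I m n, eLpNorm (fun z => f (z.1 - u, z.2 - v) - f z) p (μ.prod μ)

/-- Total modulus of continuity in the uniform norm. -/
def omegaC (m : ℕ → ℕ) (f : G m × G m → ℂ) (n : ℕ) : ℝ≥0∞ :=
  ⨆ u ∈ I m n, ⨆ v ∈ I m n, ⨆ z : G m × G m, (‖f (z.1 - u, z.2 - v) - f z‖₊ : ℝ≥0∞)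


variable {m : ℕ → ℕ}

section NatLemmas
variable (hm : ∀ k, 2 ≤ m k)
include hm

lemma M_pos (k : ℕ) : 0 < M m k := by
  induction k with
  | zero => exact Nat.one_pos
  | succ k ih => exact Nat.mul_pos (by have := hm k; omega) ih

lemma two_pow_le_M (k : ℕ) : 2 ^ k ≤ M m k := by
  induction k with
  | zero => exact le_refl 1
  | succ k ih =>
      have h2 := hm k
      calc 2 ^ (k+1) = 2 * 2 ^ k := by ring
      _ ≤ m k * M m k := Nat.mul_le_mul h2 ih
      _ = M m (k+1) := rfl

omit hm in
lemma M_eq_mul_prod {j k : ℕ} (h : j ≤ k) :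
    M m k = M m j * ∏ l ∈ Finset.Ico j k, m l := by
  induction k with
  | zero => interval_cases j; simp [M]
  | succ k ih =>
      rcases Nat.lt_or_ge j (k+1) with h' | h'
      · have hjk : j ≤ k := by omega
        have hs : M m (k+1) = m k * M m k := rfl
        rw [hs, ih hjk, Finset.prod_Ico_succ_top hjk]
        ring
      · have : j = k + 1 := by omega
        subst this; simp

omit hm in
lemma M_dvd_M {j k : ℕ} (h : j ≤ k) : M m j ∣ M m k :=
  ⟨_, M_eq_mul_prod h⟩

lemma M_le_M {j k : ℕ} (h : j ≤ k) : M m j ≤ M m k :=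
  Nat.le_of_dvd (M_pos hm k) (M_dvd_M h)

omit hm in
lemma M_eq_prod (N : ℕ) : M m N = ∏ l ∈ Finset.range N, m l := by
  have h := M_eq_mul_prod (m := m) (Nat.zero_le N)
  rw [show M m 0 = 1 from rfl, Nat.one_mul] at h
  rw [Finset.range_eq_Ico]
  exact h

lemma digit_lt (u k : ℕ) : digit m u k < m k :=
  Nat.mod_lt _ (by have := hm k; omega)

omit hm in
lemma digit_eq_zero_of_lt {u k : ℕ} (h : u < M m k) : digit m u k = 0 := by
  unfold digit; rw [Nat.div_eq_of_lt h, Nat.zero_mod]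

lemma lt_M_of_lt_index {u k : ℕ} (h : u < k) : u < M m k :=
  lt_of_lt_of_le (lt_of_lt_of_le Nat.lt_two_pow_self
    (Nat.pow_le_pow_right (by norm_num) (le_of_lt h))) (two_pow_le_M hm k)

lemma digit_mul_M_lt {k t : ℕ} (h : k < t) (s : ℕ) : digit m (s * M m t) k = 0 := by
  have hMk : 0 < M m k := M_pos hm k
  have heq : M m t = M m k * ∏ l ∈ Finset.Ico k t, m l := M_eq_mul_prod (le_of_lt h)
  have hdvd : m k ∣ ∏ l ∈ Finset.Ico k t, m l :=
    Finset.dvd_prod_of_mem _ (Finset.mem_Ico.2 ⟨le_refl k, h⟩)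
  obtain ⟨P, hP⟩ := hdvd
  unfold digit
  rw [heq, show s * (M m k * (∏ l ∈ Finset.Ico k t, m l)) = s * (∏ l ∈ Finset.Ico k t, m l) * M m k by ring,
    Nat.mul_div_cancel _ hMk, hP, show s * (m k * P) = s * P * m k by ring, Nat.mul_mod_left]

lemma digit_mul_M_self {t : ℕ} (s : ℕ) : digit m (s * M m t) t = s % m t := by
  unfold digit
  rw [Nat.mul_div_cancel _ (M_pos hm t)]

lemma digit_mul_M_gt {k t : ℕ} (h : t < k) {s : ℕ} (hs : s < m t) :
    digit m (s * M m t) k = 0 := by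
  have heq : M m k = M m t * ∏ l ∈ Finset.Ico t k, m l := M_eq_mul_prod (le_of_lt h)
  have hdvd : m t ∣ ∏ l ∈ Finset.Ico t k, m l :=
    Finset.dvd_prod_of_mem _ (Finset.mem_Ico.2 ⟨le_refl t, h⟩)
  have hsP : s < ∏ l ∈ Finset.Ico t k, m l :=
    lt_of_lt_of_le hs (Nat.le_of_dvd
      (Finset.prod_pos fun l _ => by have := hm l; omega) hdvd)
  unfold digit
  rw [heq, ← Nat.div_div_eq_div_mul, Nat.mul_div_cancel _ (M_pos hm t),
    Nat.div_eq_of_lt hsP, Nat.zero_mod]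

lemma digit_add {t r : ℕ} (hr : r < M m t) (s k : ℕ) :
    digit m (s * M m t + r) k = digit m (s * M m t) k + digit m r k := by
  rcases Nat.lt_or_ge k t with h | h
  · -- k < t
    rw [digit_mul_M_lt hm h s, Nat.zero_add]
    have hMk : 0 < M m k := M_pos hm k
    have heq : M m t = M m k * ∏ l ∈ Finset.Ico k t, m l := M_eq_mul_prod (le_of_lt h)
    obtain ⟨P, hP⟩ : m k ∣ ∏ l ∈ Finset.Ico k t, m l :=
      Finset.dvd_prod_of_mem _ (Finset.mem_Ico.2 ⟨le_refl k, h⟩)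
    unfold digit
    rw [heq, hP]
    rw [show s * (M m k * (m k * P)) + r = r + s * P * m k * M m k by ring]
    rw [Nat.add_mul_div_right _ _ hMk, Nat.add_mul_mod_self_right]
  · -- t ≤ k
    have hrk : r < M m k := lt_of_lt_of_le hr (M_le_M hm h)
    rw [digit_eq_zero_of_lt hrk, Nat.add_zero]
    have heq : M m k = M m t * ∏ l ∈ Finset.Ico t k, m l := M_eq_mul_prod h
    have e1 : (s * M m t + r) / M m t = s := by
      rw [show s * M m t + r = r + s * M m t by ring,
        Nat.add_mul_div_right _ _ (M_pos hm t), Nat.div_eq_of_lt hr, Nat.zero_add]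
    have e2 : s * M m t / M m t = s := Nat.mul_div_cancel _ (M_pos hm t)
    unfold digit
    rw [heq, ← Nat.div_div_eq_div_mul, ← Nat.div_div_eq_div_mul, e1, e2]

lemma sum_digit (N u : ℕ) : u % M m N = ∑ k ∈ Finset.range N, digit m u k * M m k := by
  induction N with
  | zero => simp [M, Nat.mod_one]
  | succ N ih =>
      have hs : M m (N+1) = M m N * m N := by rw [Nat.mul_comm]; rfl
      rw [hs, Nat.mod_mul, Finset.sum_range_succ, ← ih]
      have : digit m u N * M m N = M m N * (u / M m N % m N) := by
        unfold digit; ring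
      rw [this]

lemma eq_sum_digit {N u : ℕ} (h : u < M m N) :
    u = ∑ k ∈ Finset.range N, digit m u k * M m k := by
  have := sum_digit hm N u
  rwa [Nat.mod_eq_of_lt h] at this

lemma digit_inj {N u v : ℕ} (hu : u < M m N) (hv : v < M m N)
    (h : ∀ k < N, digit m u k = digit m v k) : u = v := by
  rw [eq_sum_digit hm hu, eq_sum_digit hm hv]
  exact Finset.sum_congr rfl fun k hk => by
    rw [h k (Finset.mem_range.1 hk)]

lemma sum_lt {N : ℕ} {c : ℕ → ℕ} (hc : ∀ k < N, c k < m k) :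
    ∑ k ∈ Finset.range N, c k * M m k < M m N := by
  induction N with
  | zero => simp [M]
  | succ N ih =>
      have h1 : ∑ k ∈ Finset.range N, c k * M m k < M m N :=
        ih (fun k hk => hc k (by omega))
      have h2 : (c N + 1) * M m N ≤ m N * M m N :=
        Nat.mul_le_mul_right _ (hc N (by omega))
      rw [Finset.sum_range_succ]
      have : M m (N+1) = m N * M m N := rfl
      rw [this]
      calc (∑ k ∈ Finset.range N, c k * M m k) + c N * M m N
          < M m N + c N * M m N := by omega
        _ = (c N + 1) * M m N := by ring
        _ ≤ m N * M m N := h2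

lemma digit_sum {N : ℕ} {c : ℕ → ℕ} (hc : ∀ k < N, c k < m k) {j : ℕ} (hj : j < N) :
    digit m (∑ k ∈ Finset.range N, c k * M m k) j = c j := by
  induction N with
  | zero => omega
  | succ N ih =>
      have hr : ∑ k ∈ Finset.range N, c k * M m k < M m N :=
        sum_lt hm (fun k hk => hc k (by omega))
      rw [Finset.sum_range_succ, Nat.add_comm, digit_add hm hr (c N) j]
      rcases Nat.lt_or_ge j N with h | h
      · rw [digit_mul_M_lt hm h, ih (fun k hk => hc k (by omega)) h, Nat.zero_add]
      · have : j = N := by omega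
        subst this
        rw [digit_mul_M_self hm, Nat.mod_eq_of_lt (hc j (by omega)),
          digit_eq_zero_of_lt hr, Nat.add_zero]

-- tail: k with digits < j zeroed out
def tailn (m : ℕ → ℕ) (k j : ℕ) : ℕ := k / M m j * M m j

omit hm in
lemma tailn_zero (k : ℕ) : tailn m k 0 = k := by
  unfold tailn; simp [M]

omit hm in
lemma tailn_eq_zero {k N : ℕ} (h : k < M m N) : tailn m k N = 0 := by
  unfold tailn; rw [Nat.div_eq_of_lt h, Nat.zero_mul]

omit hm in
lemma tailn_succ (k j : ℕ) :
    tailn m k j = tailn m k (j+1) + digit m k j * M m j := by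
  unfold tailn digit
  have h1 : M m (j+1) = M m j * m j := by rw [Nat.mul_comm]; rfl
  rw [h1, ← Nat.div_div_eq_div_mul]
  have h2 := Nat.div_add_mod (k / M m j) (m j)
  calc k / M m j * M m j = (m j * (k / M m j / m j) + k / M m j % m j) * M m j := by
        rw [h2]
    _ = k / M m j / m j * (M m j * m j) + k / M m j % m j * M m j := by ring

omit hm in
lemma M_dvd_tailn (k j : ℕ) : M m j ∣ tailn m k j := ⟨k / M m j, Nat.mul_comm _ _⟩

omit hm in
lemma tailn_le (k j : ℕ) : tailn m k j ≤ k := Nat.div_mul_le_self k (M m j)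

omit hm in
lemma tailn_succ_le (k j : ℕ) : tailn m k (j+1) ≤ tailn m k j := by
  rw [tailn_succ k j]; omega

end NatLemmas

section ComplexLemmas

def zeta (q : ℕ) : ℂ := Complex.exp (2 * Real.pi * Complex.I / q)

lemma zeta_pow_eq_one_iff {q : ℕ} (hq : q ≠ 0) (e : ℕ) : zeta q ^ e = 1 ↔ q ∣ e :=
  (Complex.isPrimitiveRoot_exp q hq).pow_eq_one_iff_dvd e

lemma zeta_pow_self {q : ℕ} (hq : q ≠ 0) : zeta q ^ q = 1 :=
  (zeta_pow_eq_one_iff hq q).2 dvd_rfl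

lemma rad_eq_zeta_pow (k : ℕ) (x : G m) : rad m k x = zeta (m k) ^ (x k).val := by
  unfold rad zeta
  rw [← Complex.exp_nat_mul]
  congr 1
  field_simp

lemma geom_sum_eq_ite {q : ℕ} (hq : 0 < q) {z : ℂ} (hz : z ^ q = 1) :
    ∑ s ∈ Finset.range q, z ^ s = if z = 1 then (q : ℂ) else 0 := by
  split_ifs with h
  · subst h; simp
  · rw [geom_sum_eq h, hz]
    simp

lemma conj_zeta_pow {q : ℕ} (hq : q ≠ 0) (a : ℕ) :
    (starRingEnd ℂ) (zeta q ^ a) = zeta q ^ (a * (q - 1)) := by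
  have h1 : (starRingEnd ℂ) (zeta q) = (zeta q)⁻¹ := by
    unfold zeta
    rw [← Complex.exp_conj, ← Complex.exp_neg]
    congr 1
    rw [map_div₀, map_mul, map_mul, Complex.conj_I, map_natCast, map_ofNat,
      Complex.conj_ofReal]
    ring
  have h2 : (zeta q)⁻¹ = zeta q ^ (q - 1) := by
    have hq1 : 1 ≤ q := Nat.one_le_iff_ne_zero.2 hq
    have h : zeta q ^ (q - 1) * zeta q = 1 := by
      rw [← pow_succ, Nat.sub_add_cancel hq1, zeta_pow_self hq]
    exact inv_eq_of_mul_eq_one_left h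
  rw [map_pow, h1, h2, ← pow_mul, Nat.mul_comm]

lemma dvd_iff_digit_eq {q a b : ℕ} (hq : 2 ≤ q) (ha : a < q) (hb : b < q) :
    q ∣ a + b * (q - 1) ↔ a = b := by
  constructor
  · intro h
    have h' : (q : ℤ) ∣ ((a : ℤ) - b) := by
      have h1 : (q : ℤ) ∣ ((a + b * (q - 1) : ℕ) : ℤ) := Int.natCast_dvd_natCast.2 h
      have h2 : ((a + b * (q - 1) : ℕ) : ℤ) = ((a : ℤ) - b) + q * b := by
        push_cast [Nat.cast_sub (by omega : 1 ≤ q)]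
        ring
      rw [h2] at h1
      have hqb : (q : ℤ) ∣ (q : ℤ) * b := Dvd.intro _ rfl
      exact (Int.dvd_add_right hqb).1 (by rwa [add_comm] at h1)
    have := Int.eq_zero_of_dvd_of_natAbs_lt_natAbs h' (by
      simp [Int.natAbs_natCast]
      omega)
    omega
  · rintro rfl
    refine ⟨a, ?_⟩
    cases q with
    | zero => omega
    | succ q => simp only [Nat.succ_sub_one]; ring

end ComplexLemmas

section PsiLemmas
variable (hm : ∀ k, 2 ≤ m k)
include hm

lemma prod_rad_digit_ext {u : ℕ} (x : G m) {A L : ℕ} (hAL : A ≤ L)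
    (h : ∀ k, A ≤ k → digit m u k = 0) :
    ∏ k ∈ Finset.range A, rad m k x ^ digit m u k
      = ∏ k ∈ Finset.range L, rad m k x ^ digit m u k := by
  apply Finset.prod_subset (Finset.range_subset_range.2 hAL)
  intro k hk hk'
  have : A ≤ k := by
    simp only [Finset.mem_range] at hk hk'
    omega
  rw [h k this, pow_zero]

lemma psi_eq_prod {u N : ℕ} (hu : u < M m N) (x : G m) :
    psi m u x = ∏ k ∈ Finset.range N, rad m k x ^ digit m u k := by
  set L := max (u + 1) N with hL
  have h1 : psi m u x = ∏ k ∈ Finset.range L, rad m k x ^ digit m u k := by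
    unfold psi
    exact prod_rad_digit_ext hm x (le_max_left _ _) fun k hk =>
      digit_eq_zero_of_lt (lt_M_of_lt_index hm (by omega))
  have h2 : ∏ k ∈ Finset.range N, rad m k x ^ digit m u k
      = ∏ k ∈ Finset.range L, rad m k x ^ digit m u k :=
    prod_rad_digit_ext hm x (le_max_right _ _) fun k hk =>
      digit_eq_zero_of_lt (lt_of_lt_of_le hu (M_le_M hm hk))
  rw [h1, h2]

lemma psi_mul {t r : ℕ} (hr : r < M m t) (s : ℕ) (x : G m) :
    psi m (s * M m t + r) x = psi m (s * M m t) x * psi m r x := by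
  set u := s * M m t + r with hu
  have hub : u < M m (u + 1) := lt_M_of_lt_index hm (Nat.lt_succ_self u)
  have h1 : s * M m t < M m (u + 1) := lt_of_le_of_lt (by omega) hub
  have h2 : r < M m (u + 1) := lt_of_le_of_lt (by omega) hub
  rw [psi_eq_prod hm hub x, psi_eq_prod hm h1 x, psi_eq_prod hm h2 x,
    ← Finset.prod_mul_distrib]
  exact Finset.prod_congr rfl fun k _ => by
    rw [hu, digit_add hm hr s k, pow_add]

lemma psi_mul_M {s j : ℕ} (hs : s < m j) (x : G m) :
    psi m (s * M m j) x = rad m j x ^ s := by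
  have hb : s * M m j < M m (j + 1) := by
    have : M m (j+1) = m j * M m j := rfl
    rw [this]
    exact Nat.mul_lt_mul_of_lt_of_le hs (le_refl _) (M_pos hm j)
  rw [psi_eq_prod hm hb x, Finset.prod_range_succ]
  have h1 : ∀ k ∈ Finset.range j, rad m k x ^ digit m (s * M m j) k = 1 := by
    intro k hk
    rw [digit_mul_M_lt hm (Finset.mem_range.1 hk), pow_zero]
  rw [Finset.prod_congr rfl h1, Finset.prod_const_one, one_mul,
    digit_mul_M_self hm, Nat.mod_eq_of_lt hs]

omit hm in
lemma sum_range_mul_eq {β : Type*} [AddCommMonoid β] (f : ℕ → β) (a b : ℕ) :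
    ∑ i ∈ Finset.range (a * b), f i
      = ∑ s ∈ Finset.range a, ∑ i ∈ Finset.range b, f (s * b + i) := by
  induction a with
  | zero => simp
  | succ a ih =>
      rw [show (a+1) * b = a * b + b by ring, Finset.sum_range_add,
        Finset.sum_range_succ, ih]

lemma rad_pow_m (k : ℕ) (x : G m) : rad m k x ^ m k = 1 := by
  rw [rad_eq_zeta_pow, ← pow_mul, Nat.mul_comm, pow_mul,
    zeta_pow_self (by have := hm k; omega), one_pow]

lemma rad_eq_one_iff (k : ℕ) (x : G m) : rad m k x = 1 ↔ x k = 0 := by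
  haveI : NeZero (m k) := ⟨by have := hm k; omega⟩
  rw [rad_eq_zeta_pow, zeta_pow_eq_one_iff (by have := hm k; omega)]
  constructor
  · intro h
    have := (x k).val_lt
    have hz : (x k).val = 0 := by
      rcases h with ⟨c, hc⟩
      rcases Nat.eq_zero_or_pos c with rfl | hcpos
      · omega
      · have : m k * 1 ≤ m k * c := Nat.mul_le_mul_left _ hcpos
        omega
    have := ZMod.natCast_rightInverse (n := m k) (x k)
    rw [← this, hz, Nat.cast_zero]
  · intro h
    rw [h]
    simp [ZMod.val_zero]

lemma sum_psi_block (j : ℕ) (x : G m) (hx : x ∉ I m j) :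
    ∑ i ∈ Finset.range (M m j), psi m i x = 0 := by
  induction j with
  | zero => exact absurd (fun j hj => absurd hj (Nat.not_lt_zero j)) hx
  | succ j ih =>
      have hMs : M m (j+1) = m j * M m j := rfl
      rw [hMs, sum_range_mul_eq]
      have hterm : ∀ s ∈ Finset.range (m j), ∀ i ∈ Finset.range (M m j),
          psi m (s * M m j + i) x = rad m j x ^ s * psi m i x := by
        intro s hs i hi
        rw [psi_mul hm (Finset.mem_range.1 hi) s x,
          psi_mul_M hm (Finset.mem_range.1 hs) x]
      have : ∑ s ∈ Finset.range (m j), ∑ i ∈ Finset.range (M m j), psi m (s * M m j + i) x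
          = (∑ s ∈ Finset.range (m j), rad m j x ^ s)
            * ∑ i ∈ Finset.range (M m j), psi m i x := by
        rw [Finset.sum_mul]
        exact Finset.sum_congr rfl fun s hs => by
          rw [Finset.mul_sum]
          exact Finset.sum_congr rfl fun i hi => hterm s hs i hi
      rw [this]
      by_cases hxj : x ∈ I m j
      · -- then x j ≠ 0
        have hxj0 : x j ≠ 0 := by
          intro h0
          apply hx
          intro i hi
          rcases Nat.lt_or_ge i j with h | h
          · exact hxj i h
          · have : i = j := by omega
            subst this; exact h0
        have hrad : rad m j x ≠ 1 := fun h => hxj0 ((rad_eq_one_iff hm j x).1 h)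
        rw [geom_sum_eq_ite (by have := hm j; omega) (rad_pow_m hm j x), if_neg hrad,
          zero_mul]
      · rw [ih hxj, mul_zero]

end PsiLemmas

section MeasureLemmas

def xpt (m : ℕ → ℕ) (u : ℕ) : G m := fun k => ((digit m u k : ℕ) : ZMod (m k))

lemma xpt_val (hm : ∀ k, 2 ≤ m k) (u k : ℕ) : (xpt m u k).val = digit m u k :=
  ZMod.val_cast_of_lt (digit_lt hm u k)

lemma measurableSet_cyl (N : ℕ) (z : G m) :
    MeasurableSet {y : G m | ∀ j < N, y j = z j} := by
  have h : {y : G m | ∀ j < N, y j = z j}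
      = ⋂ j ∈ Set.Iio N, (fun y : G m => y j) ⁻¹' {z j} := by
    ext y; simp [Set.mem_iInter]
  rw [h]
  exact MeasurableSet.biInter (Set.to_countable _)
    (fun j _ => (measurable_pi_apply j) (measurableSet_singleton _))

lemma measurableSet_I (j : ℕ) : MeasurableSet (I m j) := by
  have h : I m j = {y : G m | ∀ i < j, y i = (0 : G m) i} := rfl
  rw [h]
  exact measurableSet_cyl j 0

instance instCountableZMod (n : ℕ) : Countable (ZMod n) := by
  cases n with
  | zero => exact inferInstanceAs (Countable ℤ)
  | succ n => exact inferInstanceAs (Countable (Fin (n+1)))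

lemma measurable_rad (k : ℕ) : Measurable (rad m k) := by
  have : rad m k = (fun t : ZMod (m k) =>
      Complex.exp (2 * Real.pi * Complex.I * (t.val : ℂ) / (m k : ℂ))) ∘ (fun x : G m => x k) :=
    rfl
  rw [this]
  exact (measurable_of_countable _).comp (measurable_pi_apply k)

lemma measurable_psi (u : ℕ) : Measurable (psi m u) := by
  unfold psi
  exact Finset.measurable_prod _ fun k _ => (measurable_rad k).pow_const _

variable {μ : Measure (G m)}

lemma integral_cylinder (hm : ∀ k, 2 ≤ m k) [IsProbabilityMeasure μ]
    (hμ : ∀ (n : ℕ) (x : G m), μ {y : G m | ∀ j < n, y j = x j} = (M m n : ℝ≥0∞)⁻¹)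
    (N : ℕ) (g : G m → ℂ) (hg : ∀ x y : G m, (∀ j < N, x j = y j) → g x = g y) :
    Integrable g μ ∧
      ∫ x, g x ∂μ = (M m N : ℝ)⁻¹ • ∑ u ∈ Finset.range (M m N), g (xpt m u) := by
  haveI : ∀ k, NeZero (m k) := fun k => ⟨by have := hm k; omega⟩
  have hrep : g = fun x => ∑ u ∈ Finset.range (M m N),
      ({y : G m | ∀ j < N, y j = xpt m u j}).indicator (fun _ => g (xpt m u)) x := by
    funext x
    set u₀ := ∑ k ∈ Finset.range N, (x k).val * M m k with hu₀def
    have hval : ∀ k, (x k).val < m k := fun k => ZMod.val_lt _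
    have hu₀ : u₀ < M m N := sum_lt hm (fun k _ => hval k)
    have hdig : ∀ j, j < N → digit m u₀ j = (x j).val := fun j hj =>
      digit_sum hm (fun k _ => hval k) hj
    have hxpt : ∀ j, j < N → xpt m u₀ j = x j := by
      intro j hj
      show ((digit m u₀ j : ℕ) : ZMod (m j)) = x j
      rw [hdig j hj]
      exact ZMod.natCast_rightInverse (x j)
    rw [Finset.sum_eq_single_of_mem u₀ (Finset.mem_range.2 hu₀)]
    · rw [Set.indicator_of_mem
        (show x ∈ {y : G m | ∀ j < N, y j = xpt m u₀ j} from fun j hj => (hxpt j hj).symm)]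
      exact hg x (xpt m u₀) (fun j hj => (hxpt j hj).symm)
    · intro u hu hne
      apply Set.indicator_of_notMem
      intro hxin
      apply hne
      apply digit_inj hm (Finset.mem_range.1 hu) hu₀
      intro k hk
      have h1 : x k = xpt m u k := hxin k hk
      have h2 : (xpt m u k).val = digit m u k := xpt_val hm u k
      rw [← h2, ← h1, ← hdig k hk]
  constructor
  · rw [hrep]
    exact integrable_finset_sum _ fun u _ =>
      (integrable_const _).indicator (measurableSet_cyl N (xpt m u))
  · conv_lhs => rw [hrep]
    rw [integral_finset_sum _ (fun u _ =>
      (integrable_const _).indicator (measurableSet_cyl N (xpt m u)))]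
    have : ∀ u ∈ Finset.range (M m N),
        ∫ x, ({y : G m | ∀ j < N, y j = xpt m u j}).indicator (fun _ => g (xpt m u)) x ∂μ
          = (M m N : ℝ)⁻¹ • g (xpt m u) := by
      intro u _
      rw [integral_indicator_const _ (measurableSet_cyl N (xpt m u)), measureReal_def, hμ N (xpt m u),
        ENNReal.toReal_inv, ENNReal.toReal_natCast]
    rw [Finset.sum_congr rfl this, ← Finset.smul_sum]

lemma sum_prod_digit (hm : ∀ k, 2 ≤ m k) (N : ℕ) (h : ℕ → ℕ → ℂ) :
    ∑ u ∈ Finset.range (M m N), ∏ k ∈ Finset.range N, h k (digit m u k)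
      = ∏ k ∈ Finset.range N, ∑ t ∈ Finset.range (m k), h k t := by
  induction N with
  | zero => simp [M]
  | succ N ih =>
      have hMs : M m (N+1) = m N * M m N := rfl
      rw [hMs, sum_range_mul_eq]
      have hinner : ∀ s ∈ Finset.range (m N), ∀ r ∈ Finset.range (M m N),
          ∏ k ∈ Finset.range (N+1), h k (digit m (s * M m N + r) k)
            = (∏ k ∈ Finset.range N, h k (digit m r k)) * h N s := by
        intro s hs r hr
        have hs' := Finset.mem_range.1 hs
        have hr' := Finset.mem_range.1 hr
        rw [Finset.prod_range_succ]
        congr 1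
        · exact Finset.prod_congr rfl fun k hk => by
            rw [digit_add hm hr' s k, digit_mul_M_lt hm (Finset.mem_range.1 hk), Nat.zero_add]
        · rw [digit_add hm hr' s N, digit_mul_M_self hm, Nat.mod_eq_of_lt hs',
            digit_eq_zero_of_lt hr', Nat.add_zero]
      calc ∑ s ∈ Finset.range (m N), ∑ r ∈ Finset.range (M m N),
              ∏ k ∈ Finset.range (N+1), h k (digit m (s * M m N + r) k)
          = ∑ s ∈ Finset.range (m N), ∑ r ∈ Finset.range (M m N),
              (∏ k ∈ Finset.range N, h k (digit m r k)) * h N s := by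
            exact Finset.sum_congr rfl fun s hs => Finset.sum_congr rfl fun r hr =>
              hinner s hs r hr
        _ = ∑ s ∈ Finset.range (m N),
              (∑ r ∈ Finset.range (M m N), ∏ k ∈ Finset.range N, h k (digit m r k)) * h N s := by
            exact Finset.sum_congr rfl fun s _ => (Finset.sum_mul _ _ _).symm
        _ = (∑ r ∈ Finset.range (M m N), ∏ k ∈ Finset.range N, h k (digit m r k))
              * ∑ s ∈ Finset.range (m N), h N s := by
            rw [← Finset.mul_sum]
        _ = ∏ k ∈ Finset.range (N+1), ∑ t ∈ Finset.range (m k), h k t := by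
            rw [ih, Finset.prod_range_succ]

lemma integral_psi_conj (hm : ∀ k, 2 ≤ m k) [IsProbabilityMeasure μ]
    (hμ : ∀ (n : ℕ) (x : G m), μ {y : G m | ∀ j < n, y j = x j} = (M m n : ℝ≥0∞)⁻¹)
    {N u v : ℕ} (hu : u < M m N) (hv : v < M m N) :
    Integrable (fun x => psi m u x * (starRingEnd ℂ) (psi m v x)) μ ∧
      ∫ x, psi m u x * (starRingEnd ℂ) (psi m v x) ∂μ = if u = v then 1 else 0 := by
  have hdep : ∀ x y : G m, (∀ j < N, x j = y j) →
      psi m u x * (starRingEnd ℂ) (psi m v x) = psi m u y * (starRingEnd ℂ) (psi m v y) := by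
    intro x y hxy
    have hpsix : ∀ w, w < M m N → psi m w x = psi m w y := by
      intro w hw
      rw [psi_eq_prod hm hw x, psi_eq_prod hm hw y]
      exact Finset.prod_congr rfl fun k hk => by
        unfold rad
        rw [hxy k (Finset.mem_range.1 hk)]
    rw [hpsix u hu, hpsix v hv]
  obtain ⟨hint, hval⟩ := integral_cylinder hm hμ N _ hdep
  refine ⟨hint, ?_⟩
  rw [hval]
  -- compute the finite sum
  set h : ℕ → ℕ → ℂ := fun k t =>
    zeta (m k) ^ (t * digit m u k + (t * digit m v k) * (m k - 1)) with hdef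
  have hterm : ∀ w ∈ Finset.range (M m N),
      psi m u (xpt m w) * (starRingEnd ℂ) (psi m v (xpt m w))
        = ∏ k ∈ Finset.range N, h k (digit m w k) := by
    intro w _
    rw [psi_eq_prod hm hu, psi_eq_prod hm hv, map_prod, ← Finset.prod_mul_distrib]
    apply Finset.prod_congr rfl
    intro k _
    have hq : m k ≠ 0 := by have := hm k; omega
    have hradw : rad m k (xpt m w) = zeta (m k) ^ digit m w k := by
      rw [rad_eq_zeta_pow, xpt_val hm]
    rw [hradw, ← pow_mul, ← pow_mul, conj_zeta_pow hq, ← pow_add]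
  rw [Finset.sum_congr rfl hterm, sum_prod_digit hm N h]
  have hinner : ∀ k ∈ Finset.range N, ∑ t ∈ Finset.range (m k), h k t
      = if digit m u k = digit m v k then (m k : ℂ) else 0 := by
    intro k _
    have hq2 := hm k
    have hq : m k ≠ 0 := by omega
    set a := digit m u k
    set b := digit m v k
    have h1 : ∀ t, h k t = (zeta (m k) ^ (a + b * (m k - 1))) ^ t := by
      intro t
      rw [hdef, ← pow_mul]
      congr 1
      ring
    have h2 : (zeta (m k) ^ (a + b * (m k - 1))) ^ m k = 1 := by
      rw [← pow_mul, Nat.mul_comm, pow_mul, zeta_pow_self hq, one_pow]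
    rw [Finset.sum_congr rfl (fun t _ => h1 t), geom_sum_eq_ite (by omega) h2]
    congr 1
    rw [zeta_pow_eq_one_iff hq]
    rw [eq_iff_iff]
    exact dvd_iff_digit_eq hq2 (digit_lt hm u k) (digit_lt hm v k)
  rw [Finset.prod_congr rfl hinner]
  by_cases huv : u = v
  · subst huv
    rw [if_pos rfl]
    have : ∏ k ∈ Finset.range N, (if digit m u k = digit m u k then (m k : ℂ) else 0)
        = (M m N : ℂ) := by
      rw [Finset.prod_congr rfl fun k _ => if_pos rfl, M_eq_prod, Nat.cast_prod]
    rw [this]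
    have hMne : (M m N : ℂ) ≠ 0 := by
      have := M_pos hm N
      exact_mod_cast Nat.cast_ne_zero.2 (by omega)
    rw [Complex.real_smul, Complex.ofReal_inv, Complex.ofReal_natCast]
    exact inv_mul_cancel₀ hMne
  · rw [if_neg huv]
    obtain ⟨k₀, hk₀N, hk₀⟩ : ∃ k₀, k₀ < N ∧ digit m u k₀ ≠ digit m v k₀ := by
      by_contra hcon
      push_neg at hcon
      exact huv (digit_inj hm hu hv fun k hk => hcon k hk)
    rw [Finset.prod_eq_zero (Finset.mem_range.2 hk₀N)
      (show (if digit m u k₀ = digit m v k₀ then ((m k₀ : ℕ) : ℂ) else 0) = 0 from if_neg hk₀),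
      smul_zero]

lemma parseval (hm : ∀ k, 2 ≤ m k) [IsProbabilityMeasure μ]
    (hμ : ∀ (n : ℕ) (x : G m), μ {y : G m | ∀ j < n, y j = x j} = (M m n : ℝ≥0∞)⁻¹)
    (N : ℕ) (c : ℕ → ℝ) :
    Integrable (fun x => ‖∑ u ∈ Finset.range (M m N), (c u : ℂ) * psi m u x‖ ^ 2) μ ∧
      ∫ x, ‖∑ u ∈ Finset.range (M m N), (c u : ℂ) * psi m u x‖ ^ 2 ∂μ
        = ∑ u ∈ Finset.range (M m N), (c u) ^ 2 := by
  set g : G m → ℂ := fun x => ∑ u ∈ Finset.range (M m N), (c u : ℂ) * psi m u x with hg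
  have hprod : ∀ x, g x * (starRingEnd ℂ) (g x)
      = ∑ u ∈ Finset.range (M m N), ∑ v ∈ Finset.range (M m N),
          ((c u : ℂ) * (c v)) * (psi m u x * (starRingEnd ℂ) (psi m v x)) := by
    intro x
    rw [hg, map_sum, Finset.sum_mul_sum]
    exact Finset.sum_congr rfl fun u _ => Finset.sum_congr rfl fun v _ => by
      rw [map_mul, Complex.conj_ofReal]
      ring
  have hintuv : ∀ u ∈ Finset.range (M m N), ∀ v ∈ Finset.range (M m N),
      Integrable (fun x => ((c u : ℂ) * (c v)) * (psi m u x * (starRingEnd ℂ) (psi m v x))) μ :=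
    fun u hu v hv => ((integral_psi_conj hm hμ (Finset.mem_range.1 hu)
      (Finset.mem_range.1 hv)).1).const_mul _
  have hintgg : Integrable (fun x => g x * (starRingEnd ℂ) (g x)) μ := by
    rw [show (fun x => g x * (starRingEnd ℂ) (g x)) = fun x =>
        ∑ u ∈ Finset.range (M m N), ∑ v ∈ Finset.range (M m N),
          ((c u : ℂ) * (c v)) * (psi m u x * (starRingEnd ℂ) (psi m v x)) from funext hprod]
    exact integrable_finset_sum _ fun u hu => integrable_finset_sum _ fun v hv => hintuv u hu v hv
  have hval : ∫ x, g x * (starRingEnd ℂ) (g x) ∂μ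
      = ((∑ u ∈ Finset.range (M m N), (c u) ^ 2 : ℝ) : ℂ) := by
    rw [show (fun x => g x * (starRingEnd ℂ) (g x)) = fun x =>
        ∑ u ∈ Finset.range (M m N), ∑ v ∈ Finset.range (M m N),
          ((c u : ℂ) * (c v)) * (psi m u x * (starRingEnd ℂ) (psi m v x)) from funext hprod,
      integral_finset_sum _ (fun u hu => integrable_finset_sum _ fun v hv => hintuv u hu v hv)]
    have : ∀ u ∈ Finset.range (M m N),
        ∫ x, ∑ v ∈ Finset.range (M m N),
            ((c u : ℂ) * (c v)) * (psi m u x * (starRingEnd ℂ) (psi m v x)) ∂μ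
          = ((c u : ℂ)) ^ 2 := by
      intro u hu
      rw [integral_finset_sum _ (fun v hv => hintuv u hu v hv)]
      have hval2 : ∀ v ∈ Finset.range (M m N),
          ∫ x, ((c u : ℂ) * (c v)) * (psi m u x * (starRingEnd ℂ) (psi m v x)) ∂μ
            = ((c u : ℂ) * (c v)) * (if u = v then 1 else 0) := by
        intro v hv
        rw [integral_const_mul, (integral_psi_conj hm hμ (Finset.mem_range.1 hu)
          (Finset.mem_range.1 hv)).2]
      rw [Finset.sum_congr rfl hval2, Finset.sum_eq_single_of_mem u hu]
      · rw [if_pos rfl, mul_one, sq]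
      · intro v _ hne
        rw [if_neg (Ne.symm hne), mul_zero]
    rw [Finset.sum_congr rfl this]
    push_cast
    rfl
  have hre : ∀ x, g x * (starRingEnd ℂ) (g x) = ((‖g x‖ ^ 2 : ℝ) : ℂ) := by
    intro x
    rw [Complex.mul_conj, Complex.normSq_eq_norm_sq]
  have hint : Integrable (fun x => ‖g x‖ ^ 2) μ := by
    have h1 := hintgg.norm
    have h2 : (fun x => ‖g x * (starRingEnd ℂ) (g x)‖) = fun x => ‖g x‖ ^ 2 := by
      funext x
      rw [hre x, Complex.norm_real, Real.norm_eq_abs, abs_of_nonneg (sq_nonneg _)]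
    rwa [h2] at h1
  refine ⟨hint, ?_⟩
  have : ∫ x, g x * (starRingEnd ℂ) (g x) ∂μ = ((∫ x, ‖g x‖ ^ 2 ∂μ : ℝ) : ℂ) := by
    rw [show (fun x => g x * (starRingEnd ℂ) (g x)) = fun x => ((‖g x‖ ^ 2 : ℝ) : ℂ) from
      funext hre]
    exact integral_ofReal
  rw [this] at hval
  exact_mod_cast hval

lemma lintegral_sq (hm : ∀ k, 2 ≤ m k) [IsProbabilityMeasure μ]
    (hμ : ∀ (n : ℕ) (x : G m), μ {y : G m | ∀ j < n, y j = x j} = (M m n : ℝ≥0∞)⁻¹)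
    (N : ℕ) (c : ℕ → ℝ) :
    ∫⁻ x, (‖∑ u ∈ Finset.range (M m N), (c u : ℂ) * psi m u x‖₊ : ℝ≥0∞) ^ (2:ℝ) ∂μ
      = ENNReal.ofReal (∑ u ∈ Finset.range (M m N), (c u) ^ 2) := by
  obtain ⟨hint, hval⟩ := parseval hm hμ N c
  set g : G m → ℂ := fun x => ∑ u ∈ Finset.range (M m N), (c u : ℂ) * psi m u x with hg
  have hpt : ∀ x, ((‖g x‖₊ : ℝ≥0∞)) ^ (2:ℝ) = ENNReal.ofReal (‖g x‖ ^ 2) := by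
    intro x
    rw [show (2:ℝ) = ((2:ℕ):ℝ) by norm_num, ENNReal.rpow_natCast,
      ← enorm_eq_nnnorm, ← ofReal_norm_eq_enorm, ← ENNReal.ofReal_pow (norm_nonneg _)]
  rw [lintegral_congr hpt,
    ← ofReal_integral_eq_lintegral_ofReal hint (Filter.Eventually.of_forall fun x => sq_nonneg _),
    hval]

lemma blocksum_eq_zero (hm : ∀ k, 2 ≤ m k) {j A : ℕ} (hA : M m j ∣ A) (d : ℕ) (x : G m)
    (hx : x ∉ I m j) :
    ∑ u ∈ Finset.Ico A (A + d * M m j), psi m u x = 0 := by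
  induction d with
  | zero => simp
  | succ d ih =>
      have h1 : A ≤ A + d * M m j := by omega
      have h2 : A + d * M m j ≤ A + (d+1) * M m j := by
        have : d * M m j ≤ (d+1) * M m j := Nat.mul_le_mul_right _ (by omega)
        omega
      rw [← Finset.sum_Ico_consecutive _ h1 h2, ih, zero_add]
      obtain ⟨s, hs⟩ : M m j ∣ A + d * M m j := by
        exact Dvd.dvd.add hA (Dvd.intro d (Nat.mul_comm _ _))
      have h3 : A + (d+1) * M m j = (A + d * M m j) + M m j := by ring
      rw [h3, Finset.sum_Ico_eq_sum_range]
      have h4 : (A + d * M m j) + M m j - (A + d * M m j) = M m j := by omega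
      rw [h4]
      have h5 : ∀ i ∈ Finset.range (M m j), psi m ((A + d * M m j) + i) x
          = psi m (A + d * M m j) x * psi m i x := by
        intro i hi
        have hi' := Finset.mem_range.1 hi
        have : A + d * M m j = s * M m j := by rw [hs]; ring
        rw [this]
        exact psi_mul hm hi' s x
      rw [Finset.sum_congr rfl h5, ← Finset.mul_sum, sum_psi_block hm j x hx, mul_zero]

lemma sqrt_M_sum (hm : ∀ k, 2 ≤ m k) (J : ℕ) :
    ∑ j ∈ Finset.range J, Real.sqrt (M m j) ≤ 4 * Real.sqrt (M m J) := by
  induction J with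
  | zero => simp
  | succ J ih =>
      rw [Finset.sum_range_succ]
      have h1 : Real.sqrt (M m (J+1)) ≥ Real.sqrt 2 * Real.sqrt (M m J) := by
        rw [← Real.sqrt_mul (by norm_num)]
        apply Real.sqrt_le_sqrt
        have : M m (J+1) = m J * M m J := rfl
        rw [this]
        push_cast
        have h2 : (2:ℝ) ≤ m J := by exact_mod_cast hm J
        have h3 : (0:ℝ) ≤ M m J := Nat.cast_nonneg _
        nlinarith
      have h5 : Real.sqrt (M m J) ≥ 0 := Real.sqrt_nonneg _
      have hs2 : Real.sqrt 2 ≥ 5/4 := by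
        nlinarith [Real.sq_sqrt (show (0:ℝ) ≤ 2 by norm_num), Real.sqrt_nonneg 2]
      nlinarith [Real.sqrt_nonneg (M m (J+1))]

lemma enn_rpow_half_eq (N : ℕ) :
    ((N : ℝ≥0∞)) ^ ((1:ℝ)/2) = ENNReal.ofReal (Real.sqrt N) := by
  rw [← ENNReal.ofReal_natCast, ENNReal.ofReal_rpow_of_nonneg (Nat.cast_nonneg _) (by norm_num),
    Real.sqrt_eq_rpow]

end MeasureLemmas

section Decomp

lemma gswap (hm : ∀ k, 2 ≤ m k) (n J : ℕ) (hnJ : n < M m J) (a : ℕ → ℝ) (j : ℕ) (x : G m) :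
    ∑ u ∈ Finset.range (M m J),
        ((∑ k ∈ (Finset.Icc 1 n).filter
            (fun k => tailn m k (j+1) ≤ u ∧ u < tailn m k j), a k : ℝ) : ℂ) * psi m u x
      = ∑ k ∈ Finset.Icc 1 n, (a k : ℂ)
          * ∑ u ∈ Finset.Ico (tailn m k (j+1)) (tailn m k j), psi m u x := by
  have hIco : ∀ k ∈ Finset.Icc 1 n,
      Finset.Ico (tailn m k (j+1)) (tailn m k j)
        = (Finset.range (M m J)).filter (fun u => tailn m k (j+1) ≤ u ∧ u < tailn m k j) := by
    intro k hk
    have h1 : tailn m k j ≤ k := tailn_le k j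
    have h2 : k ≤ n := (Finset.mem_Icc.1 hk).2
    ext u
    simp only [Finset.mem_Ico, Finset.mem_filter, Finset.mem_range]
    constructor
    · intro h
      exact ⟨by omega, h⟩
    · intro h
      exact h.2
  symm
  calc ∑ k ∈ Finset.Icc 1 n, (a k : ℂ)
          * ∑ u ∈ Finset.Ico (tailn m k (j+1)) (tailn m k j), psi m u x
      = ∑ k ∈ Finset.Icc 1 n, ∑ u ∈ Finset.range (M m J),
          (if tailn m k (j+1) ≤ u ∧ u < tailn m k j then (a k : ℂ) * psi m u x else 0) := by
        apply Finset.sum_congr rfl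
        intro k hk
        rw [hIco k hk, Finset.mul_sum, Finset.sum_filter]
    _ = ∑ u ∈ Finset.range (M m J), ∑ k ∈ Finset.Icc 1 n,
          (if tailn m k (j+1) ≤ u ∧ u < tailn m k j then (a k : ℂ) * psi m u x else 0) :=
        Finset.sum_comm
    _ = ∑ u ∈ Finset.range (M m J),
        ((∑ k ∈ (Finset.Icc 1 n).filter
            (fun k => tailn m k (j+1) ≤ u ∧ u < tailn m k j), a k : ℝ) : ℂ) * psi m u x := by
        apply Finset.sum_congr rfl
        intro u _
        rw [← Finset.sum_filter]
        push_cast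
        rw [Finset.sum_mul]

lemma decomp (hm : ∀ k, 2 ≤ m k) (n J : ℕ) (hnJ : n < M m J) (a : ℕ → ℝ) (x : G m) :
    ∑ k ∈ Finset.Icc 1 n, (a k : ℂ) * D m k x
      = ∑ j ∈ Finset.range J, ∑ k ∈ Finset.Icc 1 n,
          (a k : ℂ) * ∑ u ∈ Finset.Ico (tailn m k (j+1)) (tailn m k j), psi m u x := by
  rw [Finset.sum_comm]
  apply Finset.sum_congr rfl
  intro k hk
  have hkM : k < M m J := lt_of_le_of_lt (Finset.mem_Icc.1 hk).2 hnJ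
  have htel : ∀ L : ℕ, (∑ u ∈ Finset.range (tailn m k L), psi m u x)
      + ∑ j ∈ Finset.range L, ∑ u ∈ Finset.Ico (tailn m k (j+1)) (tailn m k j), psi m u x
      = ∑ u ∈ Finset.range k, psi m u x := by
    intro L
    induction L with
    | zero => rw [tailn_zero]; simp
    | succ L ihL =>
        have hco : (∑ u ∈ Finset.range (tailn m k (L+1)), psi m u x)
            + ∑ u ∈ Finset.Ico (tailn m k (L+1)) (tailn m k L), psi m u x
            = ∑ u ∈ Finset.range (tailn m k L), psi m u x := by
          simp only [Finset.range_eq_Ico]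
          exact Finset.sum_Ico_consecutive (fun u => psi m u x) (Nat.zero_le _) (tailn_succ_le (m := m) k L)
        rw [Finset.sum_range_succ]
        linear_combination ihL + hco
  have h0 := htel J
  rw [tailn_eq_zero hkM] at h0
  simp only [Finset.range_zero, Finset.sum_empty, Nat.zero_add, zero_add] at h0
  rw [← Finset.mul_sum, h0]
  rfl

lemma coeff_sq_sum_le (hm : ∀ k, 2 ≤ m k) (n J j : ℕ) (a : ℕ → ℝ) :
    ∑ u ∈ Finset.range (M m J),
        (∑ k ∈ (Finset.Icc 1 n).filter
            (fun k => tailn m k (j+1) ≤ u ∧ u < tailn m k j), a k) ^ 2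
      ≤ ((M m (j+1) : ℝ)) ^ 2 * ∑ k ∈ Finset.Icc 1 n, (a k) ^ 2 := by
  set T : ℕ → Finset ℕ := fun u => (Finset.Icc 1 n).filter
      (fun k => tailn m k (j+1) ≤ u ∧ u < tailn m k j) with hT
  have hM1pos : 0 < M m (j+1) := M_pos hm (j+1)
  have hdigM : ∀ k, digit m k j * M m j ≤ M m (j+1) := by
    intro k
    have h1 : digit m k j ≤ m j := le_of_lt (digit_lt hm k j)
    calc digit m k j * M m j ≤ m j * M m j := Nat.mul_le_mul_right _ h1
      _ = M m (j+1) := rfl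
  have hcard : ∀ u, (T u).card ≤ M m (j+1) := by
    intro u
    have hdiv : ∀ k ∈ T u, k / M m (j+1) = u / M m (j+1) := by
      intro k hk
      obtain ⟨_, h1, h2⟩ := Finset.mem_filter.1 hk
      have h3 : tailn m k j = tailn m k (j+1) + digit m k j * M m j := tailn_succ k j
      have h4 : u < tailn m k (j+1) + M m (j+1) := by
        have := hdigM k
        omega
      have h5 : tailn m k (j+1) = k / M m (j+1) * M m (j+1) := rfl
      symm
      apply Nat.div_eq_of_lt_le
      · rw [← h5]; exact h1
      · rw [show (k / M m (j+1) + 1) * M m (j+1) = k / M m (j+1) * M m (j+1) + M m (j+1) by ring,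
          ← h5]
        exact h4
    have := Finset.card_le_card_of_injOn (fun k => k % M m (j+1))
      (fun k hk => Finset.mem_range.2 (Nat.mod_lt _ hM1pos))
      (fun k1 h1 k2 h2 heq => by
        have e1 := Nat.div_add_mod k1 (M m (j+1))
        have e2 := Nat.div_add_mod k2 (M m (j+1))
        have hq1 := hdiv k1 h1
        have hq2 := hdiv k2 h2
        have heq' : k1 % M m (j+1) = k2 % M m (j+1) := by simpa using heq
        rw [← e1, ← e2, hq1 , hq2, heq'])
    simpa using this
  have hstep1 : ∀ u, (∑ k ∈ T u, a k) ^ 2 ≤ (M m (j+1) : ℝ) * ∑ k ∈ T u, (a k) ^ 2 := by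
    intro u
    refine le_trans sq_sum_le_card_mul_sum_sq ?_
    apply mul_le_mul_of_nonneg_right _ (Finset.sum_nonneg fun k _ => sq_nonneg _)
    exact_mod_cast hcard u
  have hdouble : ∑ u ∈ Finset.range (M m J), ∑ k ∈ T u, (a k) ^ 2
      ≤ (M m (j+1) : ℝ) * ∑ k ∈ Finset.Icc 1 n, (a k) ^ 2 := by
    have h1 : ∑ u ∈ Finset.range (M m J), ∑ k ∈ T u, (a k) ^ 2
        = ∑ k ∈ Finset.Icc 1 n,
            (((Finset.range (M m J)).filter
              (fun u => tailn m k (j+1) ≤ u ∧ u < tailn m k j)).card : ℝ) * (a k) ^ 2 := by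
      calc ∑ u ∈ Finset.range (M m J), ∑ k ∈ T u, (a k) ^ 2
          = ∑ u ∈ Finset.range (M m J), ∑ k ∈ Finset.Icc 1 n,
              (if tailn m k (j+1) ≤ u ∧ u < tailn m k j then (a k) ^ 2 else 0) :=
            Finset.sum_congr rfl fun u _ => Finset.sum_filter _ _
        _ = ∑ k ∈ Finset.Icc 1 n, ∑ u ∈ Finset.range (M m J),
              (if tailn m k (j+1) ≤ u ∧ u < tailn m k j then (a k) ^ 2 else 0) :=
            Finset.sum_comm
        _ = ∑ k ∈ Finset.Icc 1 n,
            (((Finset.range (M m J)).filter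
              (fun u => tailn m k (j+1) ≤ u ∧ u < tailn m k j)).card : ℝ) * (a k) ^ 2 := by
            apply Finset.sum_congr rfl
            intro k _
            rw [← Finset.sum_filter, Finset.sum_const, nsmul_eq_mul]
    have h2 : ∀ k, (((Finset.range (M m J)).filter
        (fun u => tailn m k (j+1) ≤ u ∧ u < tailn m k j)).card) ≤ M m (j+1) := by
      intro k
      have hsub : (Finset.range (M m J)).filter
          (fun u => tailn m k (j+1) ≤ u ∧ u < tailn m k j)
          ⊆ Finset.Ico (tailn m k (j+1)) (tailn m k j) := by
        intro u hu
        obtain ⟨_, h1', h2'⟩ := Finset.mem_filter.1 hu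
        exact Finset.mem_Ico.2 ⟨h1', h2'⟩
      refine le_trans (Finset.card_le_card hsub) ?_
      rw [Nat.card_Ico]
      have h3 := tailn_succ (m := m) k j
      have h4 := hdigM k
      omega
    rw [h1, Finset.mul_sum]
    apply Finset.sum_le_sum
    intro k _
    apply mul_le_mul_of_nonneg_right _ (sq_nonneg _)
    exact_mod_cast h2 k
  calc ∑ u ∈ Finset.range (M m J), (∑ k ∈ T u, a k) ^ 2
      ≤ ∑ u ∈ Finset.range (M m J), (M m (j+1) : ℝ) * ∑ k ∈ T u, (a k) ^ 2 :=
        Finset.sum_le_sum fun u _ => hstep1 u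
    _ = (M m (j+1) : ℝ) * ∑ u ∈ Finset.range (M m J), ∑ k ∈ T u, (a k) ^ 2 := by
        rw [Finset.mul_sum]
    _ ≤ (M m (j+1) : ℝ) * ((M m (j+1) : ℝ) * ∑ k ∈ Finset.Icc 1 n, (a k) ^ 2) :=
        mul_le_mul_of_nonneg_left hdouble (Nat.cast_nonneg _)
    _ = ((M m (j+1) : ℝ)) ^ 2 * ∑ k ∈ Finset.Icc 1 n, (a k) ^ 2 := by ring

lemma rpow_two_half (y : ℝ≥0∞) : (y ^ 2) ^ ((1:ℝ)/2) = y := by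
  rw [← ENNReal.rpow_natCast y 2, ← ENNReal.rpow_mul]
  norm_num

lemma key_bound (hm : ∀ k, 2 ≤ m k) {B : ℕ} (hB : ∀ k, m k ≤ B)
    {μ : Measure (G m)} [IsProbabilityMeasure μ]
    (hμ : ∀ (n : ℕ) (x : G m), μ {y : G m | ∀ j < n, y j = x j} = (M m n : ℝ≥0∞)⁻¹)
    {n : ℕ} (hn : 1 ≤ n) (a : ℕ → ℝ) :
    ∫⁻ x, (‖∑ k ∈ Finset.Icc 1 n, (a k : ℂ) * D m k x‖₊ : ℝ≥0∞) ∂μ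
      ≤ (4 * B * B : ℝ≥0∞) * (n : ℝ≥0∞) ^ ((1:ℝ)/2)
          * ENNReal.ofReal (∑ k ∈ Finset.Icc 1 n, (a k) ^ 2) ^ ((1:ℝ)/2) := by
  have hex : ∃ j, n < M m j := ⟨n + 1, lt_M_of_lt_index hm (Nat.lt_succ_self n)⟩
  set J := Nat.find hex with hJdef
  have hJ : n < M m J := Nat.find_spec hex
  have hJmin : ∀ j, j < J → M m j ≤ n := fun j hj => by
    have := Nat.find_min hex hj; omega
  set S := ∑ k ∈ Finset.Icc 1 n, (a k) ^ 2 with hS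
  set c : ℕ → ℕ → ℝ := fun j u => ∑ k ∈ (Finset.Icc 1 n).filter
      (fun k => tailn m k (j+1) ≤ u ∧ u < tailn m k j), a k with hc
  set g : ℕ → G m → ℂ := fun j x =>
      ∑ u ∈ Finset.range (M m J), (c j u : ℂ) * psi m u x with hgdef
  have hmeasg : ∀ j, Measurable (g j) := fun j =>
    Finset.measurable_sum _ fun u _ => (measurable_psi u).const_mul _
  have hsup : ∀ j, ∀ x, x ∉ I m j → g j x = 0 := by
    intro j x hx
    rw [hgdef]
    simp only []
    rw [gswap hm n J hJ a j x]
    apply Finset.sum_eq_zero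
    intro k _
    rw [tailn_succ k j, blocksum_eq_zero hm
      (dvd_trans (M_dvd_M (Nat.le_succ j)) (M_dvd_tailn k (j+1))) _ x hx, mul_zero]
  have hdecomp : ∀ x, ∑ k ∈ Finset.Icc 1 n, (a k : ℂ) * D m k x
      = ∑ j ∈ Finset.range J, g j x := by
    intro x
    rw [decomp hm n J hJ a x]
    exact Finset.sum_congr rfl fun j _ => (gswap hm n J hJ a j x).symm
  have hstep1 : ∫⁻ x, (‖∑ k ∈ Finset.Icc 1 n, (a k : ℂ) * D m k x‖₊ : ℝ≥0∞) ∂μ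
      ≤ ∑ j ∈ Finset.range J, ∫⁻ x, (‖g j x‖₊ : ℝ≥0∞) ∂μ := by
    calc ∫⁻ x, (‖∑ k ∈ Finset.Icc 1 n, (a k : ℂ) * D m k x‖₊ : ℝ≥0∞) ∂μ
        = ∫⁻ x, (‖∑ j ∈ Finset.range J, g j x‖₊ : ℝ≥0∞) ∂μ :=
          lintegral_congr fun x => by rw [hdecomp x]
      _ ≤ ∫⁻ x, ∑ j ∈ Finset.range J, (‖g j x‖₊ : ℝ≥0∞) ∂μ := by
          apply lintegral_mono
          intro x
          calc (‖∑ j ∈ Finset.range J, g j x‖₊ : ℝ≥0∞)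
              ≤ ((∑ j ∈ Finset.range J, ‖g j x‖₊ : ℝ≥0) : ℝ≥0∞) :=
                ENNReal.coe_le_coe.2 (nnnorm_sum_le _ _)
            _ = ∑ j ∈ Finset.range J, (‖g j x‖₊ : ℝ≥0∞) := ENNReal.coe_finset_sum _ _
      _ = ∑ j ∈ Finset.range J, ∫⁻ x, (‖g j x‖₊ : ℝ≥0∞) ∂μ :=
          lintegral_finset_sum _ fun j _ => (hmeasg j).nnnorm.coe_nnreal_ennreal
  have hμI : ∀ j, μ (I m j) = (M m j : ℝ≥0∞)⁻¹ := by
    intro j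
    have := hμ j 0
    convert this using 2
    rfl
  have hstep2 : ∀ j ∈ Finset.range J, ∫⁻ x, (‖g j x‖₊ : ℝ≥0∞) ∂μ
      ≤ (B : ℝ≥0∞) * ((M m j : ℝ≥0∞) ^ ((1:ℝ)/2)) * (ENNReal.ofReal S) ^ ((1:ℝ)/2) := by
    intro j _
    set φ : G m → ℝ≥0∞ := (I m j).indicator (fun _ => 1) with hφ
    have hφmeas : Measurable φ := measurable_const.indicator (measurableSet_I j)
    have hpt : ∀ x, (‖g j x‖₊ : ℝ≥0∞) = (φ * fun x => (‖g j x‖₊ : ℝ≥0∞)) x := by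
      intro x
      by_cases hx : x ∈ I m j
      · simp [hφ, Set.indicator_of_mem hx]
      · have h0 := hsup j x hx
        simp [hφ, Set.indicator_of_notMem hx, h0]
    have hH := ENNReal.lintegral_mul_le_Lp_mul_Lq μ
      Real.HolderConjugate.two_two
      hφmeas.aemeasurable ((hmeasg j).nnnorm.coe_nnreal_ennreal).aemeasurable
    have hφ2 : ∫⁻ x, φ x ^ (2:ℝ) ∂μ = (M m j : ℝ≥0∞)⁻¹ := by
      have hptφ : ∀ x, φ x ^ (2:ℝ) = φ x := by
        intro x
        by_cases hx : x ∈ I m j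
        · simp [hφ, Set.indicator_of_mem hx]
        · simp [hφ, Set.indicator_of_notMem hx,
            ENNReal.zero_rpow_of_pos (by norm_num : (0:ℝ) < 2)]
      rw [lintegral_congr hptφ, hφ, lintegral_indicator (measurableSet_I j),
        setLIntegral_one, hμI j]
    have hg2 : ∫⁻ x, (‖g j x‖₊ : ℝ≥0∞) ^ (2:ℝ) ∂μ = ENNReal.ofReal
        (∑ u ∈ Finset.range (M m J), (c j u) ^ 2) := by
      rw [hgdef]
      exact lintegral_sq hm hμ J (c j)
    have hbound := coeff_sq_sum_le hm n J j a
    have hMne0 : (M m j : ℝ≥0∞) ≠ 0 := by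
      have := M_pos hm j
      exact_mod_cast Nat.cast_ne_zero.2 (by omega)
    have hMnetop : (M m j : ℝ≥0∞) ≠ ⊤ := ENNReal.natCast_ne_top _
    calc ∫⁻ x, (‖g j x‖₊ : ℝ≥0∞) ∂μ
        = ∫⁻ x, (φ * fun x => (‖g j x‖₊ : ℝ≥0∞)) x ∂μ := lintegral_congr hpt
      _ ≤ (∫⁻ x, φ x ^ (2:ℝ) ∂μ) ^ ((1:ℝ)/2)
          * (∫⁻ x, (‖g j x‖₊ : ℝ≥0∞) ^ (2:ℝ) ∂μ) ^ ((1:ℝ)/2) := hH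
      _ = ((M m j : ℝ≥0∞)⁻¹) ^ ((1:ℝ)/2)
          * (ENNReal.ofReal (∑ u ∈ Finset.range (M m J), (c j u) ^ 2)) ^ ((1:ℝ)/2) := by
          rw [hφ2, hg2]
      _ ≤ ((M m j : ℝ≥0∞)⁻¹) ^ ((1:ℝ)/2)
          * (((M m (j+1) : ℝ≥0∞)) ^ 2 * ENNReal.ofReal S) ^ ((1:ℝ)/2) := by
          apply mul_le_mul_right
          apply ENNReal.rpow_le_rpow _ (by norm_num)
          calc ENNReal.ofReal (∑ u ∈ Finset.range (M m J), (c j u) ^ 2)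
              ≤ ENNReal.ofReal (((M m (j+1) : ℝ)) ^ 2 * S) := ENNReal.ofReal_le_ofReal hbound
            _ = ((M m (j+1) : ℝ≥0∞)) ^ 2 * ENNReal.ofReal S := by
                rw [ENNReal.ofReal_mul (sq_nonneg _), ENNReal.ofReal_pow (Nat.cast_nonneg _),
                  ENNReal.ofReal_natCast]
      _ = ((M m j : ℝ≥0∞)⁻¹) ^ ((1:ℝ)/2) * ((M m (j+1) : ℝ≥0∞))
          * (ENNReal.ofReal S) ^ ((1:ℝ)/2) := by
          rw [ENNReal.mul_rpow_of_nonneg _ _ (by norm_num : (0:ℝ) ≤ 1/2), rpow_two_half,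
            mul_assoc]
      _ ≤ ((M m j : ℝ≥0∞)⁻¹) ^ ((1:ℝ)/2) * ((B : ℝ≥0∞) * (M m j : ℝ≥0∞))
          * (ENNReal.ofReal S) ^ ((1:ℝ)/2) := by
          apply mul_le_mul_left
          apply mul_le_mul_right
          have : M m (j+1) = m j * M m j := rfl
          rw [this]
          push_cast
          exact mul_le_mul_left (by exact_mod_cast hB j) _
      _ = (B : ℝ≥0∞) * ((M m j : ℝ≥0∞) ^ ((1:ℝ)/2)) * (ENNReal.ofReal S) ^ ((1:ℝ)/2) := by
          congr 1
          have hsplit : (M m j : ℝ≥0∞) = (M m j : ℝ≥0∞) ^ ((1:ℝ)/2)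
              * (M m j : ℝ≥0∞) ^ ((1:ℝ)/2) := by
            rw [← ENNReal.rpow_add _ _ hMne0 hMnetop]
            norm_num
          have hhne0 : (M m j : ℝ≥0∞) ^ ((1:ℝ)/2) ≠ 0 := by
            simp [ENNReal.rpow_eq_zero_iff, hMne0, hMnetop]
          have hhnetop : (M m j : ℝ≥0∞) ^ ((1:ℝ)/2) ≠ ⊤ := by
            simp [ENNReal.rpow_eq_top_iff, hMne0, hMnetop]
          rw [ENNReal.inv_rpow]
          calc ((M m j : ℝ≥0∞) ^ ((1:ℝ)/2))⁻¹ * ((B : ℝ≥0∞) * (M m j : ℝ≥0∞))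
              = (B : ℝ≥0∞) * (((M m j : ℝ≥0∞) ^ ((1:ℝ)/2))⁻¹ * (M m j : ℝ≥0∞)) := by ring
            _ = (B : ℝ≥0∞) * (((M m j : ℝ≥0∞) ^ ((1:ℝ)/2))⁻¹
                  * ((M m j : ℝ≥0∞) ^ ((1:ℝ)/2) * (M m j : ℝ≥0∞) ^ ((1:ℝ)/2))) := by
                rw [← hsplit]
            _ = (B : ℝ≥0∞) * ((M m j : ℝ≥0∞) ^ ((1:ℝ)/2)) := by
                rw [show ((M m j : ℝ≥0∞) ^ ((1:ℝ)/2))⁻¹ * ((M m j : ℝ≥0∞) ^ ((1:ℝ)/2)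
                      * (M m j : ℝ≥0∞) ^ ((1:ℝ)/2)) = (M m j : ℝ≥0∞) ^ ((1:ℝ)/2) from by
                  rw [← mul_assoc, ENNReal.inv_mul_cancel hhne0 hhnetop, one_mul]]
  have hsqsum : ∑ j ∈ Finset.range J, (M m j : ℝ≥0∞) ^ ((1:ℝ)/2)
      ≤ 4 * (M m J : ℝ≥0∞) ^ ((1:ℝ)/2) := by
    calc ∑ j ∈ Finset.range J, (M m j : ℝ≥0∞) ^ ((1:ℝ)/2)
        = ∑ j ∈ Finset.range J, ENNReal.ofReal (Real.sqrt (M m j)) :=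
          Finset.sum_congr rfl fun j _ => enn_rpow_half_eq _
      _ = ENNReal.ofReal (∑ j ∈ Finset.range J, Real.sqrt (M m j)) :=
          (ENNReal.ofReal_sum_of_nonneg fun j _ => Real.sqrt_nonneg _).symm
      _ ≤ ENNReal.ofReal (4 * Real.sqrt (M m J)) :=
          ENNReal.ofReal_le_ofReal (sqrt_M_sum hm J)
      _ = 4 * (M m J : ℝ≥0∞) ^ ((1:ℝ)/2) := by
          rw [ENNReal.ofReal_mul (by norm_num), ENNReal.ofReal_ofNat, enn_rpow_half_eq]
  have hMJB : (M m J : ℝ≥0∞) ≤ (B : ℝ≥0∞) * n := by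
    have hJ1 : 1 ≤ J := by
      by_contra h
      have hJ0 : J = 0 := by omega
      rw [hJ0] at hJ
      have : M m 0 = 1 := rfl
      omega
    have h1 : M m J = m (J-1) * M m (J-1) := by
      have : J = (J-1) + 1 := by omega
      rw [this]
      rfl
    have h2 : M m J ≤ B * n := by
      rw [h1]
      exact Nat.mul_le_mul (hB _) (hJmin (J-1) (by omega))
    exact_mod_cast h2
  have hBn : (M m J : ℝ≥0∞) ^ ((1:ℝ)/2) ≤ (B : ℝ≥0∞) * (n : ℝ≥0∞) ^ ((1:ℝ)/2) := by
    calc (M m J : ℝ≥0∞) ^ ((1:ℝ)/2) ≤ ((B : ℝ≥0∞) * n) ^ ((1:ℝ)/2) :=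
          ENNReal.rpow_le_rpow hMJB (by norm_num)
      _ = (B : ℝ≥0∞) ^ ((1:ℝ)/2) * (n : ℝ≥0∞) ^ ((1:ℝ)/2) :=
          ENNReal.mul_rpow_of_nonneg _ _ (by norm_num)
      _ ≤ (B : ℝ≥0∞) * (n : ℝ≥0∞) ^ ((1:ℝ)/2) := by
          apply mul_le_mul_left
          have hB1 : (1:ℝ≥0∞) ≤ (B : ℝ≥0∞) := by
            have : 2 ≤ B := le_trans (hm 0) (hB 0)
            exact_mod_cast by omega
          calc (B : ℝ≥0∞) ^ ((1:ℝ)/2) ≤ (B : ℝ≥0∞) ^ (1:ℝ) :=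
                ENNReal.rpow_le_rpow_of_exponent_le hB1 (by norm_num)
            _ = (B : ℝ≥0∞) := ENNReal.rpow_one _
  calc ∫⁻ x, (‖∑ k ∈ Finset.Icc 1 n, (a k : ℂ) * D m k x‖₊ : ℝ≥0∞) ∂μ
      ≤ ∑ j ∈ Finset.range J, ∫⁻ x, (‖g j x‖₊ : ℝ≥0∞) ∂μ := hstep1
    _ ≤ ∑ j ∈ Finset.range J,
          (B : ℝ≥0∞) * ((M m j : ℝ≥0∞) ^ ((1:ℝ)/2)) * (ENNReal.ofReal S) ^ ((1:ℝ)/2) :=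
        Finset.sum_le_sum hstep2
    _ = (B : ℝ≥0∞) * (∑ j ∈ Finset.range J, (M m j : ℝ≥0∞) ^ ((1:ℝ)/2))
          * (ENNReal.ofReal S) ^ ((1:ℝ)/2) := by
        rw [← Finset.sum_mul, ← Finset.mul_sum]
    _ ≤ (B : ℝ≥0∞) * (4 * (M m J : ℝ≥0∞) ^ ((1:ℝ)/2)) * (ENNReal.ofReal S) ^ ((1:ℝ)/2) :=
        mul_le_mul_left (mul_le_mul_right hsqsum _) _
    _ ≤ (B : ℝ≥0∞) * (4 * ((B : ℝ≥0∞) * (n : ℝ≥0∞) ^ ((1:ℝ)/2)))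
          * (ENNReal.ofReal S) ^ ((1:ℝ)/2) :=
        mul_le_mul_left (mul_le_mul_right (mul_le_mul_right hBn _) _) _
    _ = (4 * B * B : ℝ≥0∞) * (n : ℝ≥0∞) ^ ((1:ℝ)/2)
          * (ENNReal.ofReal S) ^ ((1:ℝ)/2) := by
        ring

end Decomp

theorem statement_4 (m : ℕ → ℕ) (hm2 : ∀ k, 2 ≤ m k) (hmbd : ∃ B, ∀ k, m k ≤ B)
    (μ : Measure (G m)) [IsProbabilityMeasure μ]
    (hμ : ∀ (n : ℕ) (x : G m), μ {y : G m | ∀ j < n, y j = x j} = (M m n : ℝ≥0∞)⁻¹) :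
    ∃ c : ℝ≥0, 0 < c ∧ ∀ n : ℕ, 1 ≤ n → ∀ a : ℕ → ℝ,
      (n : ℝ≥0∞)⁻¹ * ∫⁻ x, (‖(∑ k ∈ Finset.Icc 1 n, (a k : ℂ) * D m k x)‖₊ : ℝ≥0∞) ∂μ ≤
        (c : ℝ≥0∞) / (n : ℝ≥0∞) ^ ((1 : ℝ) / 2) *
          ENNReal.ofReal (∑ k ∈ Finset.Icc 1 n, (a k) ^ 2) ^ ((1 : ℝ) / 2) := by
  obtain ⟨B, hB⟩ := hmbd
  have hB2 : 2 ≤ B := le_trans (hm2 0) (hB 0)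
  refine ⟨((4 * B * B : ℕ) : ℝ≥0), ?_, ?_⟩
  · have h1 : 0 < 4 * B * B := by positivity
    exact_mod_cast h1
  · intro n hn a
    have hkey := key_bound hm2 hB hμ hn a
    set T := ENNReal.ofReal (∑ k ∈ Finset.Icc 1 n, (a k) ^ 2) ^ ((1:ℝ)/2) with hT
    have hn0 : (n : ℝ≥0∞) ≠ 0 := by
      exact_mod_cast Nat.cast_ne_zero.2 (by omega)
    have hnt : (n : ℝ≥0∞) ≠ ⊤ := ENNReal.natCast_ne_top n
    set x := (n : ℝ≥0∞) ^ ((1:ℝ)/2) with hx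
    have hx0 : x ≠ 0 := by
      simp [hx, ENNReal.rpow_eq_zero_iff, hn0, hnt]
    have hxt : x ≠ ⊤ := by
      simp [hx, ENNReal.rpow_eq_top_iff, hn0, hnt]
    have hnxx : (n : ℝ≥0∞) = x * x := by
      rw [hx, ← ENNReal.rpow_add _ _ hn0 hnt]
      norm_num
    have hcast : ((((4 * B * B : ℕ) : ℝ≥0)) : ℝ≥0∞) = (4 * B * B : ℝ≥0∞) := by
      push_cast
      ring
    calc (n : ℝ≥0∞)⁻¹ * ∫⁻ x, (‖(∑ k ∈ Finset.Icc 1 n, (a k : ℂ) * D m k x)‖₊ : ℝ≥0∞) ∂μ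
        ≤ (n : ℝ≥0∞)⁻¹ * ((4 * B * B : ℝ≥0∞) * x * T) := mul_le_mul_right hkey _
      _ = ((((4 * B * B : ℕ) : ℝ≥0)) : ℝ≥0∞) / x * T := by
          rw [hcast, hnxx, ENNReal.mul_inv (Or.inl hx0) (Or.inl hxt), div_eq_mul_inv]
          calc x⁻¹ * x⁻¹ * ((4 * B * B : ℝ≥0∞) * x * T)
              = (4 * B * B : ℝ≥0∞) * x⁻¹ * T * (x⁻¹ * x) := by ring
            _ = (4 * B * B : ℝ≥0∞) * x⁻¹ * T := by
                rw [ENNReal.inv_mul_cancel hx0 hxt, mul_one]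

end Vilenkin
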